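/- Let ts₁ and ts₂ be strictly increasing lists of positive naturals, each containing no pair of twins (no t with both t and twin(t) in the list), and let zip ts₁ vs₁ ws₁ and zip ts₂ vs₂ ws₂ be the corresponding histories. If zip (map twin ts₁) ws₁ vs₁ ⊆ zip ts₂ vs₂ ws₂ and zip (map twin ts₂) ws₂ vs₂ ⊆ zip ts₁ vs₁ ws₁ as finite maps (with all lists of equal length and the maps injective on time-stamps), then map twin ts₁ = ts₂, ws₁ = vs₂, and vs₁ = ws₂. -/

import Mathlib

def twin (t : ℕ) : ℕ := if t % 2 = 1 then t + 1 else t - 1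

/-- The history (finite map) sending `ts[i] ↦ (vs[i], ws[i])`, as a list of bindings. -/
def zipH {A : Type*} (ts : List ℕ) (vs ws : List A) : List (ℕ × A × A) :=
  ts.zip (vs.zip ws)

lemma twin_pos {t : ℕ} (h : 1 ≤ t) : 1 ≤ twin t := by
  unfold twin; split_ifs <;> omega

lemma twin_twin {t : ℕ} (h : 1 ≤ t) : twin (twin t) = t := by
  unfold twin; split_ifs <;> omega

lemma twin_lt {a b : ℕ} (ha : 1 ≤ a) (hab : a < b) (hnt : b ≠ twin a) :
    twin a < twin b := by
  unfold twin at *; split_ifs at * <;> omega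

lemma sorted_ext : ∀ {l₁ l₂ : List ℕ}, l₁.Chain' (· < ·) → l₂.Chain' (· < ·) →
    (∀ x, x ∈ l₁ ↔ x ∈ l₂) → l₁ = l₂ := by
  intro l₁
  induction l₁ with
  | nil =>
    intro l₂ _ _ h
    cases l₂ with
    | nil => rfl
    | cons b m => exact absurd ((h b).mpr (by simp)) (by simp)
  | cons a l ih =>
    intro l₂ h₁ h₂ h
    cases l₂ with
    | nil => exact absurd ((h a).mp (by simp)) (by simp)
    | cons b m =>
      have hp₁ := (List.isChain_iff_pairwise.mp h₁)
      have hp₂ := (List.isChain_iff_pairwise.mp h₂)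
      have hab : a = b := by
        have ha : a ∈ b :: m := (h a).mp (by simp)
        have hb : b ∈ a :: l := (h b).mpr (by simp)
        rcases List.mem_cons.mp ha with h' | h' <;>
          rcases List.mem_cons.mp hb with h'' | h''
        · omega
        · omega
        · have := (List.pairwise_cons.mp hp₂).1 a h'; omega
        · have h3 := (List.pairwise_cons.mp hp₂).1 a h'
          have h4 := (List.pairwise_cons.mp hp₁).1 b h''
          omega
      subst hab
      have : l = m := by
        apply ih h₁.tail h₂.tail
        intro x
        constructor
        · intro hx
          have hax := (List.pairwise_cons.mp hp₁).1 x hx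
          rcases List.mem_cons.mp ((h x).mp (List.mem_cons_of_mem _ hx)) with h' | h'
          · omega
          · exact h'
        · intro hx
          have hax := (List.pairwise_cons.mp hp₂).1 x hx
          rcases List.mem_cons.mp ((h x).mpr (List.mem_cons_of_mem _ hx)) with h' | h'
          · omega
          · exact h'
      rw [this]

lemma zipH_mem_iff {A : Type*} {ts : List ℕ} {vs ws : List A}
    (hv : ts.length = vs.length) (hw : ts.length = ws.length)
    {t : ℕ} {v w : A} :
    (t, v, w) ∈ zipH ts vs ws ↔ ∃ i, ∃ h : i < ts.length,
      ts[i] = t ∧ vs[i]'(by omega) = v ∧ ws[i]'(by omega) = w := by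
  unfold zipH
  rw [List.mem_iff_getElem]
  constructor
  · rintro ⟨i, h, he⟩
    simp only [List.length_zip] at h
    have hi : i < ts.length := by omega
    refine ⟨i, hi, ?_⟩
    rw [List.getElem_zip, List.getElem_zip] at he
    simpa [Prod.ext_iff] using he
  · rintro ⟨i, hi, h1, h2, h3⟩
    refine ⟨i, by simp only [List.length_zip]; omega, ?_⟩
    rw [List.getElem_zip, List.getElem_zip]
    simp [h1, h2, h3]

set_option maxHeartbeats 1000000 in
theorem exchanger_client_quiescent {A : Type*}
    (ts₁ ts₂ : List ℕ) (vs₁ ws₁ vs₂ ws₂ : List A)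
    (hlen₁v : ts₁.length = vs₁.length) (hlen₁w : ts₁.length = ws₁.length)
    (hlen₂v : ts₂.length = vs₂.length) (hlen₂w : ts₂.length = ws₂.length)
    (hpos₁ : ∀ t ∈ ts₁, 1 ≤ t) (hpos₂ : ∀ t ∈ ts₂, 1 ≤ t)
    (hsort₁ : ts₁.Chain' (· < ·)) (hsort₂ : ts₂.Chain' (· < ·))
    (hnt₁ : ∀ a ∈ ts₁, ∀ b ∈ ts₁, b ≠ twin a)
    (hnt₂ : ∀ a ∈ ts₂, ∀ b ∈ ts₂, b ≠ twin a)
    (hsub₁ : ∀ p ∈ zipH (ts₁.map twin) ws₁ vs₁, p ∈ zipH ts₂ vs₂ ws₂)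
    (hsub₂ : ∀ p ∈ zipH (ts₂.map twin) ws₂ vs₂, p ∈ zipH ts₁ vs₁ ws₁) :
    ts₁.map twin = ts₂ ∧ ws₁ = vs₂ ∧ vs₁ = ws₂ := by
  have hml : (ts₁.map twin).length = ts₁.length := List.length_map _
  have hml₂ : (ts₂.map twin).length = ts₂.length := List.length_map _
  have key₁ : ∀ i, ∀ h : i < ts₁.length, ∃ j, ∃ hj : j < ts₂.length,
      ts₂[j] = twin ts₁[i] ∧ vs₂[j]'(by omega) = ws₁[i]'(by omega) ∧
      ws₂[j]'(by omega) = vs₁[i]'(by omega) := by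
    intro i h
    have hm := hsub₁ (twin ts₁[i], ws₁[i]'(by omega), vs₁[i]'(by omega))
      ((zipH_mem_iff (by omega) (by omega)).mpr
        ⟨i, by omega, by simp, rfl, rfl⟩)
    obtain ⟨j, hj, h1, h2, h3⟩ := (zipH_mem_iff hlen₂v hlen₂w).mp hm
    exact ⟨j, hj, h1, h2, h3⟩
  have key₂ : ∀ j, ∀ hj : j < ts₂.length, ∃ i, ∃ h : i < ts₁.length,
      ts₁[i] = twin ts₂[j] := by
    intro j hj
    have hm := hsub₂ (twin ts₂[j], ws₂[j]'(by omega), vs₂[j]'(by omega))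
      ((zipH_mem_iff (by omega) (by omega)).mpr
        ⟨j, by omega, by simp, rfl, rfl⟩)
    obtain ⟨i, hi, h1, _⟩ := (zipH_mem_iff hlen₁v hlen₁w).mp hm
    exact ⟨i, hi, h1⟩
  have heq : ts₁.map twin = ts₂ := by
    apply sorted_ext
    · refine List.isChain_iff_pairwise.mpr ?_
      rw [List.pairwise_map]
      refine (List.isChain_iff_pairwise.mp hsort₁).imp_of_mem ?_
      intro a b ha hb hab
      exact twin_lt (hpos₁ a ha) hab (hnt₁ a ha b hb)
    · exact hsort₂
    · intro x
      constructor
      · intro hx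
        obtain ⟨a, ha, hax⟩ := List.mem_map.mp hx
        obtain ⟨i, hi, hai⟩ := List.mem_iff_getElem.mp ha
        obtain ⟨j, hj, h1, _⟩ := key₁ i hi
        have : ts₂[j] = x := by rw [h1, hai, hax]
        exact this ▸ List.getElem_mem hj
      · intro hx
        obtain ⟨j, hj, hjx⟩ := List.mem_iff_getElem.mp hx
        obtain ⟨i, hi, h1⟩ := key₂ j hj
        have : twin ts₁[i] = x := by
          rw [h1, twin_twin (hpos₂ _ (hjx ▸ List.getElem_mem hj)), hjx]
        rw [← this]
        exact List.mem_map.mpr ⟨ts₁[i], List.getElem_mem hi, rfl⟩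
  subst heq
  have hnd₂ : (ts₁.map twin).Nodup :=
    (List.isChain_iff_pairwise.mp hsort₂).imp (fun h => ne_of_lt h)
  refine ⟨rfl, ?_, ?_⟩
  · apply List.ext_getElem (by omega)
    intro i hi hi'
    obtain ⟨j, hj, h1, h2, h3⟩ := key₁ i (by omega)
    have hji : j = i := by
      have : (ts₁.map twin)[j] = (ts₁.map twin)[i]'(by omega) := by
        rw [h1]; simp
      exact (List.Nodup.getElem_inj_iff hnd₂).mp this
    subst hji
    exact h2.symm
  · apply List.ext_getElem (by omega)
    intro i hi hi'
    obtain ⟨j, hj, h1, h2, h3⟩ := key₁ i (by omega)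
    have hji : j = i := by
      have : (ts₁.map twin)[j] = (ts₁.map twin)[i]'(by omega) := by
        rw [h1]; simp
      exact (List.Nodup.getElem_inj_iff hnd₂).mp this
    subst hji
    exact h3.symm
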